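/- arXiv:2304.00082 — 2 statements merged into one kernel-verified Lean document; each statement's English description precedes it below -/
import Mathlib

section
/- Let s, t, m be natural numbers with s ≤ m, t ≤ m and m ≤ s + t. The multinomial coefficient m! / ((s+t−m)! · (m−s)! · (m−t)!) is odd if and only if m equals the bitwise OR of s and t. -/
lemma and_eq_self_iff_testBit (y x : ℕ) :
    y &&& x = y ↔ ∀ i, y.testBit i = true → x.testBit i = true := by
  constructor
  · intro h i hi
    have := congrArg (fun z => z.testBit i) h
    simp only [Nat.testBit_and, hi, Bool.true_and] at this
    exact this
  · intro h
    apply Nat.eq_of_testBit_eq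
    intro i
    rw [Nat.testBit_and]
    cases hy : y.testBit i
    · simp
    · simp [h i hy]

lemma add_xor_of_and (x : ℕ) : ∀ y, y &&& x = y → y + (x ^^^ y) = x := by
  induction x using Nat.strong_induction_on with
  | _ x ih =>
    intro y h
    rcases Nat.eq_zero_or_pos x with rfl | hx
    · simp only [Nat.and_zero] at h
      simp [← h]
    · have hdiv : y / 2 &&& x / 2 = y / 2 := by
        rw [← Nat.and_div_two, h]
      have IH := ih (x / 2) (Nat.div_lt_self hx one_lt_two) (y / 2) hdiv
      rw [← Nat.xor_div_two] at IH
      have hmod : y % 2 = 1 → x % 2 = 1 := by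
        intro hy
        have h2 : (y &&& x) % 2 = 1 := by rw [h, hy]
        exact (Nat.and_mod_two_eq_one.mp h2).2
      have hxor := @Nat.xor_mod_two_eq_one x y
      omega

lemma odd_choose_iff (n : ℕ) : ∀ k, Odd (n.choose k) ↔ k &&& n = k := by
  induction n using Nat.strong_induction_on with
  | _ n ih =>
    intro k
    rcases Nat.eq_zero_or_pos n with rfl | hn
    · cases k <;> simp [Nat.choose]
    · haveI : Fact (Nat.Prime 2) := ⟨Nat.prime_two⟩
      have hmod := @Choose.choose_modEq_choose_mod_mul_choose_div_nat n k 2 _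
      have hsplit : Odd (n.choose k) ↔
          Odd ((n % 2).choose (k % 2) * (n / 2).choose (k / 2)) := by
        rw [Nat.odd_iff, Nat.odd_iff]
        rw [Nat.ModEq] at hmod
        omega
      rw [hsplit, Nat.odd_mul, ih (n / 2) (Nat.div_lt_self hn one_lt_two) (k / 2)]
      have hfirst : Odd ((n % 2).choose (k % 2)) ↔ (k % 2 = 1 → n % 2 = 1) := by
        rcases Nat.mod_two_eq_zero_or_one n with h1 | h1 <;>
          rcases Nat.mod_two_eq_zero_or_one k with h2 | h2 <;>
            rw [h1, h2] <;> simp [Nat.choose]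
      rw [hfirst]
      have hA2 := @Nat.and_mod_two_eq_one k n
      have hAd : (k &&& n) / 2 = k / 2 &&& n / 2 := Nat.and_div_two
      omega

lemma key_bits (s t m : ℕ) (hs : s ≤ m) (ht : t ≤ m) (hm : m ≤ s + t) :
    ((m - s) &&& m = m - s ∧ (m - t) &&& s = m - t) ↔ m = s ||| t := by
  constructor
  · rintro ⟨hb, hc⟩
    have hbm := (and_eq_self_iff_testBit _ _).mp hb
    have hcs := (and_eq_self_iff_testBit _ _).mp hc
    have hsx : s = m ^^^ (m - s) := by
      have := add_xor_of_and m (m - s) hb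
      omega
    have hS : ∀ i, s.testBit i = (m.testBit i ^^ (m - s).testBit i) := by
      intro i
      conv_lhs => rw [hsx]
      rw [Nat.testBit_xor]
    have hsm : ∀ i, s.testBit i = true → m.testBit i = true := by
      intro i hi
      rw [hS i] at hi
      have hbmi := hbm i
      revert hi hbmi
      cases m.testBit i <;> cases (m - s).testBit i <;> simp
    have hcm : (m - t) &&& m = m - t := by
      apply (and_eq_self_iff_testBit _ _).mpr
      intro i hi
      exact hsm i (hcs i hi)
    have htx : t = m ^^^ (m - t) := by
      have := add_xor_of_and m (m - t) hcm
      omega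
    have hT : ∀ i, t.testBit i = (m.testBit i ^^ (m - t).testBit i) := by
      intro i
      conv_lhs => rw [htx]
      rw [Nat.testBit_xor]
    apply Nat.eq_of_testBit_eq
    intro i
    rw [Nat.testBit_lor, hS i, hT i]
    have h1 := hbm i
    have h2 := hcs i
    rw [hS i] at h2
    clear hS hT hsx htx hb hc hbm hcs hsm hcm hs ht hm
    cases hmi : m.testBit i <;> cases hbi : (m - s).testBit i <;>
      cases hci : (m - t).testBit i <;> simp_all
  · intro h
    have hsm : s &&& m = s := by
      apply (and_eq_self_iff_testBit _ _).mpr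
      intro i hi
      rw [h, Nat.testBit_lor, hi]; rfl
    have htm : t &&& m = t := by
      apply (and_eq_self_iff_testBit _ _).mpr
      intro i hi
      rw [h, Nat.testBit_lor, hi]; simp
    have hsx : m - s = m ^^^ s := by
      have := add_xor_of_and m s hsm
      omega
    have htx : m - t = m ^^^ t := by
      have := add_xor_of_and m t htm
      omega
    have hsmb := (and_eq_self_iff_testBit _ _).mp hsm
    have htmb := (and_eq_self_iff_testBit _ _).mp htm
    constructor
    · apply (and_eq_self_iff_testBit _ _).mpr
      intro i hi
      rw [hsx, Nat.testBit_xor] at hi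
      have h1 := hsmb i
      clear hsx htx hsm htm hsmb htmb h hs ht hm
      cases hmi : m.testBit i <;> cases hsi : s.testBit i <;> simp_all
    · apply (and_eq_self_iff_testBit _ _).mpr
      intro i hi
      rw [htx, Nat.testBit_xor] at hi
      have h3 := htmb i
      have h4 : m.testBit i = (s.testBit i || t.testBit i) := by
        rw [h, Nat.testBit_lor]
      clear hsx htx hsm htm hsmb htmb h hs ht hm
      cases hmi : m.testBit i <;> cases hti : t.testBit i <;>
        cases hsi : s.testBit i <;> simp_all

/-- The multinomial coefficient m!/((s+t−m)!(m−s)!(m−t)!) is odd iff m = s ||| t. -/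
theorem multinomial_odd_iff_or (s t m : ℕ) (hs : s ≤ m) (ht : t ≤ m) (hm : m ≤ s + t) :
    Odd (m.factorial / ((s + t - m).factorial * (m - s).factorial * (m - t).factorial)) ↔
      m = s ||| t := by
  have hb : m - s ≤ m := Nat.sub_le _ _
  have hc : m - t ≤ s := by omega
  have h1 := Nat.choose_mul_factorial_mul_factorial hb
  have h2 := Nat.choose_mul_factorial_mul_factorial hc
  have hms : m - (m - s) = s := by omega
  have hsc : s - (m - t) = s + t - m := by omega
  rw [hms] at h1
  rw [hsc] at h2
  have hdiv : m.factorial / ((s + t - m).factorial * (m - s).factorial * (m - t).factorial)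
      = m.choose (m - s) * s.choose (m - t) := by
    apply Nat.div_eq_of_eq_mul_left
    · positivity
    · rw [← h1, ← h2]; ring
  rw [hdiv, Nat.odd_mul, odd_choose_iff m (m - s), odd_choose_iff s (m - t)]
  exact key_bits s t m hs ht hm
end

section
/- Let c_k(d) denote the k-fold Catalan convolution, i.e. the sum over all k-tuples (d₁,...,d_k) of natural numbers with d₁+...+d_k = d of the product catalan(d₁)···catalan(d_k) (so c_k(d) is the coefficient of X^d in C(X)^k, where C is the Catalan generating function). Then for all k ≥ 1 and d ≥ 0: (d + k) · c_k(d) = k · binom(2d + k − 1, d + k − 1). -/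
open Finset PowerSeries

private noncomputable def Cgf : PowerSeries ℕ := PowerSeries.mk catalan

private lemma sum_AT_succ (f : ℕ → ℕ) (k n : ℕ) :
    ∑ x ∈ Finset.Nat.antidiagonalTuple (k+1) n, ∏ i, f (x i) =
      ∑ p ∈ Finset.HasAntidiagonal.antidiagonal n, f p.1 * ∑ y ∈ Finset.Nat.antidiagonalTuple k p.2, ∏ i, f (y i) := by
  have hsig : ∑ p ∈ (Finset.HasAntidiagonal.antidiagonal n).sigma
        (fun p => Finset.Nat.antidiagonalTuple k p.2),
        f p.1.1 * ∏ i, f (p.2 i) =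
      ∑ p ∈ Finset.HasAntidiagonal.antidiagonal n, ∑ y ∈ Finset.Nat.antidiagonalTuple k p.2,
        f p.1 * ∏ i, f (y i) := Finset.sum_sigma _ _ _
  simp_rw [← Finset.mul_sum] at hsig
  rw [← hsig]
  refine Finset.sum_nbij' (fun x => ⟨(x 0, ∑ i : Fin k, x i.succ), Fin.tail x⟩)
    (fun z => Fin.cons z.1.1 z.2) ?_ ?_ ?_ ?_ ?_
  · intro x hx
    rw [Finset.Nat.mem_antidiagonalTuple] at hx
    simp only [Finset.mem_sigma, Finset.HasAntidiagonal.mem_antidiagonal, Finset.Nat.mem_antidiagonalTuple]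
    exact ⟨by rw [← hx, Fin.sum_univ_succ], rfl⟩
  · intro z hz
    simp only [Finset.mem_sigma, Finset.HasAntidiagonal.mem_antidiagonal, Finset.Nat.mem_antidiagonalTuple] at hz
    rw [Finset.Nat.mem_antidiagonalTuple, Fin.sum_cons, hz.2, hz.1]
  · intro x _; exact Fin.cons_self_tail x
  · intro z hz
    simp only [Finset.mem_sigma, Finset.HasAntidiagonal.mem_antidiagonal, Finset.Nat.mem_antidiagonalTuple] at hz
    simp only [Fin.cons_zero, Fin.tail_cons]
    congr 1
    simp [Fin.sum_cons, hz.2]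
  · intro x _
    simp [Fin.tail, Fin.prod_univ_succ]

private lemma AT_eq_coeff (k n : ℕ) :
    ∑ x ∈ Finset.Nat.antidiagonalTuple k n, ∏ i, catalan (x i) =
      PowerSeries.coeff n (Cgf ^ k) := by
  induction k generalizing n with
  | zero =>
    cases n with
    | zero => simp
    | succ n => simp
  | succ k ih =>
    rw [sum_AT_succ, pow_succ', PowerSeries.coeff_mul]
    refine Finset.sum_congr rfl fun p _ => ?_
    rw [ih, Cgf, PowerSeries.coeff_mk]

private lemma Cgf_eq : Cgf = 1 + PowerSeries.X * Cgf ^ 2 := by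
  ext n
  cases n with
  | zero => simp [Cgf]
  | succ n =>
    rw [map_add, PowerSeries.coeff_succ_X_mul, PowerSeries.coeff_one]
    simp only [Nat.succ_ne_zero, if_false, zero_add]
    rw [Cgf, PowerSeries.coeff_mk, sq, PowerSeries.coeff_mul, catalan_succ']
    simp [PowerSeries.coeff_mk]

/-- c : convolution numbers -/
private noncomputable def cc (k n : ℕ) : ℕ := PowerSeries.coeff n (Cgf ^ k)

private lemma cc_rec (k n : ℕ) : cc (k+1) (n+1) = cc k (n+1) + cc (k+2) n := by
  have h : (Cgf:PowerSeries ℕ) ^ (k+1) = Cgf ^ k + PowerSeries.X * Cgf ^ (k+2) := by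
    calc Cgf ^ (k+1) = Cgf ^ k * Cgf := by ring
    _ = Cgf ^ k * (1 + PowerSeries.X * Cgf ^ 2) := by rw [← Cgf_eq]
    _ = Cgf ^ k + PowerSeries.X * Cgf ^ (k+2) := by ring
  unfold cc
  rw [h, map_add, PowerSeries.coeff_succ_X_mul]

private lemma cc_zero (k : ℕ) : cc k 0 = 1 := by
  unfold cc
  rw [← AT_eq_coeff, Finset.Nat.antidiagonalTuple_zero_right]
  simp

private lemma cc_one (n : ℕ) : cc 1 n = catalan n := by
  unfold cc
  rw [← AT_eq_coeff, Finset.Nat.antidiagonalTuple_one]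
  simp

private lemma cc_base (d : ℕ) : (2*d + 1) * cc 1 d = Nat.choose (2*d+1) d := by
  rw [cc_one]
  cases d with
  | zero => simp
  | succ d =>
    -- (2d+3) * catalan (d+1) = C(2d+3, d+1)
    have h1 : (d+2) * catalan (d+1) = Nat.centralBinom (d+1) := succ_mul_catalan_eq_centralBinom (d+1)
    have h2 : (2*(d+1)+1) * Nat.choose (2*(d+1)) (d+1) = Nat.choose (2*(d+1)+1) (d+1+1) * (d+1+1) :=
      Nat.add_one_mul_choose_eq (2*(d+1)) (d+1)
    have h3 : Nat.choose (2*(d+1)+1) (d+2) = Nat.choose (2*(d+1)+1) (d+1) := by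
      rw [← Nat.choose_symm (by omega)]
      congr 1; omega
    have hcb : Nat.centralBinom (d+1) = Nat.choose (2*(d+1)) (d+1) := rfl
    apply Nat.eq_of_mul_eq_mul_left (show 0 < d+2 by omega)
    calc (d+2) * ((2*(d+1)+1) * catalan (d+1))
        = (2*(d+1)+1) * ((d+2) * catalan (d+1)) := by ring
      _ = (2*(d+1)+1) * Nat.choose (2*(d+1)) (d+1) := by rw [h1, hcb]
      _ = Nat.choose (2*(d+1)+1) (d+2) * (d+2) := by rw [h2]
      _ = (d+2) * Nat.choose (2*(d+1)+1) (d+1) := by rw [h3]; ring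

/-- Main invariant: (2d+k+1) * c_{k+1}(d) = (k+1) * C(2d+k+1, d). -/
private lemma cc_formula : ∀ d k, (2*d + k + 1) * cc (k+1) d = (k+1) * Nat.choose (2*d + k + 1) d := by
  intro d
  induction d with
  | zero => intro k; simp [cc_zero]
  | succ d ihd =>
    intro k
    induction k with
    | zero =>
      have := cc_base (d+1)
      simpa [Nat.add_comm, Nat.add_assoc, Nat.add_left_comm, Nat.mul_comm, Nat.mul_left_comm,
        show 2*(d+1)+0+1 = 2*(d+1)+1 from rfl] using this
    | succ k ihk =>
      -- target: (2(d+1)+(k+1)+1) * cc (k+2) (d+1) = (k+2) * C(2(d+1)+(k+1)+1, d+1)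
      have hrec : cc (k+2) (d+1) = cc (k+1) (d+1) + cc (k+3) d := cc_rec (k+1) d
      set N := 2*d + k + 3 with hN
      have h1 : N * cc (k+1) (d+1) = (k+1) * Nat.choose N (d+1) := by
        have := ihk
        rw [show 2*(d+1)+k+1 = N by omega] at this
        exact this
      have h2 : N * cc (k+3) d = (k+3) * Nat.choose N d := by
        have := ihd (k+2)
        rw [show 2*d+(k+2)+1 = N by omega] at this
        exact this
      rw [show 2*(d+1)+(k+1)+1 = N + 1 by omega]
      -- relation: C(N, d+1)*(d+1) = C(N, d)*(N - d) with N - d = d+k+3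
      have hrel : Nat.choose N (d+1) * (d+1) = Nat.choose N d * (d+k+3) := by
        have := Nat.choose_succ_right_eq N d
        rwa [show N - d = d+k+3 by omega] at this
      have hpas : Nat.choose (N+1) (d+1) = Nat.choose N d + Nat.choose N (d+1) :=
        Nat.choose_succ_succ N d
      apply Nat.eq_of_mul_eq_mul_left (show 0 < N by omega)
      -- N * ((N+1) * cc (k+2) (d+1)) = N * ((k+2) * C(N+1, d+1))
      calc N * ((N+1) * cc (k+2) (d+1))
          = (N+1) * (N * (cc (k+1) (d+1) + cc (k+3) d)) := by rw [hrec]; ring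
        _ = (N+1) * (N * cc (k+1) (d+1) + N * cc (k+3) d) := by ring
        _ = (N+1) * ((k+1) * Nat.choose N (d+1) + (k+3) * Nat.choose N d) := by rw [h1, h2]
        _ = N * ((k+2) * Nat.choose (N+1) (d+1)) := by
            rw [hpas]
            have key : 2*(d+k+3) * Nat.choose N d = 2*(d+1) * Nat.choose N (d+1) := by
              calc 2*(d+k+3) * Nat.choose N d = 2 * (Nat.choose N d * (d+k+3)) := by ring
                _ = 2 * (Nat.choose N (d+1) * (d+1)) := by rw [hrel]
                _ = 2*(d+1) * Nat.choose N (d+1) := by ring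
            rw [hN] at key ⊢
            zify at key ⊢
            linear_combination key

/-- The k-fold Catalan convolution: (d+k)·c_k(d) = k·C(2d+k−1, d+k−1). -/
theorem catalan_convolution_formula (k d : ℕ) (hk : 1 ≤ k) :
    (d + k) * (∑ x ∈ Finset.Nat.antidiagonalTuple k d, ∏ i, catalan (x i)) =
      k * Nat.choose (2 * d + k - 1) (d + k - 1) := by
  obtain ⟨k, rfl⟩ : ∃ k', k = k' + 1 := ⟨k - 1, by omega⟩
  rw [AT_eq_coeff]
  change (d + (k+1)) * cc (k+1) d = _
  have h := cc_formula d k   -- (2d+k+1) * cc (k+1) d = (k+1) * C(2d+k+1, d)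
  have hM : 2*d + (k+1) - 1 = 2*d + k := by omega
  have hsymm : Nat.choose (2*d+k) (d + (k+1) - 1) = Nat.choose (2*d+k) d := by
    rw [show d + (k+1) - 1 = (2*d+k) - d by omega]
    exact Nat.choose_symm (by omega)
  rw [hM, hsymm]
  -- need: (d+k+1) * cc (k+1) d = (k+1) * C(2d+k, d)
  -- from h and (d+k+1)*C(2d+k+1,d) = (2d+k+1)*C(2d+k,d)
  have habs : (d+k+1) * Nat.choose (2*d+k+1) d = (2*d+k+1) * Nat.choose (2*d+k) d := by
    have h1 := Nat.add_one_mul_choose_eq (2*d+k) d  -- (2d+k+1)*C(2d+k,d) = C(2d+k+1,d+1)*(d+1)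
    have h2 := Nat.choose_succ_right_eq (2*d+k+1) d -- C(2d+k+1,d+1)*(d+1) = C(2d+k+1,d)*(2d+k+1-d)
    rw [show 2*d+k+1-d = d+k+1 by omega] at h2
    rw [Nat.mul_comm (Nat.choose (2*d+k+1) d) (d+k+1)] at h2
    omega
  apply Nat.eq_of_mul_eq_mul_left (show 0 < 2*d+k+1 by omega)
  calc (2*d+k+1) * ((d + (k+1)) * cc (k+1) d)
      = (d+k+1) * ((2*d+k+1) * cc (k+1) d) := by ring
    _ = (d+k+1) * ((k+1) * Nat.choose (2*d+k+1) d) := by rw [h]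
    _ = (k+1) * ((d+k+1) * Nat.choose (2*d+k+1) d) := by ring
    _ = (k+1) * ((2*d+k+1) * Nat.choose (2*d+k) d) := by rw [habs]
    _ = (2*d+k+1) * ((k+1) * Nat.choose (2*d+k) d) := by ring
end
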